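/- Let 𝒦 = {K₁, …, K_M} be a finite set of row-stochastic N×N real matrices, each with strictly positive diagonal entries, and let p₁, …, p_M be strictly positive reals summing to 1. If Σᵢ pᵢKᵢ is primitive, then ρ( ((I−J) ⊗ (I−J)) · Σᵢ pᵢ (Kᵢ ⊗ Kᵢ) ) < 1. -/

import Mathlib

open Matrix Kronecker Finset

/-- A square real matrix is row-stochastic if it has nonnegative entries and
each of its rows sums to 1. -/
def RowStochastic {N : ℕ} (K : Matrix (Fin N) (Fin N) ℝ) : Prop :=
  (∀ i j, 0 ≤ K i j) ∧ ∀ i, ∑ j, K i j = 1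

/-- A nonnegative square matrix `T` is primitive if `T ^ m` has all entries
strictly positive for some integer `m ≥ 1`. -/
def IsPrimitive {n : Type*} [Fintype n] [DecidableEq n] (T : Matrix n n ℝ) : Prop :=
  ∃ m : ℕ, 1 ≤ m ∧ ∀ i j, 0 < (T ^ m) i j

/-- `J = (1/N) 𝟙 𝟙ᵀ`, the `N × N` averaging matrix. -/
noncomputable def Jmat (N : ℕ) : Matrix (Fin N) (Fin N) ℝ :=
  Matrix.of fun _ _ => (N : ℝ)⁻¹

/-- The spectral radius of a real square matrix: the maximum modulus of its
complex eigenvalues. -/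
noncomputable def specRad {n : Type*} [Fintype n] [DecidableEq n]
    (A : Matrix n n ℝ) : ℝ :=
  (spectralRadius ℂ (A.map Complex.ofReal)).toReal

/-! ### Auxiliary lemmas -/

theorem aux_eigvec {n : Type*} [Fintype n] [DecidableEq n] (B : Matrix n n ℂ) (μ : ℂ)
    (h : μ ∈ spectrum ℂ B) : ∃ v, v ≠ 0 ∧ B.mulVec v = μ • v := by
  rw [spectrum.mem_iff] at h
  rw [Matrix.isUnit_iff_isUnit_det, isUnit_iff_ne_zero, not_ne_iff] at h
  obtain ⟨v, hv, hv0⟩ := (Matrix.exists_mulVec_eq_zero_iff).2 h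
  refine ⟨v, hv, ?_⟩
  rw [Matrix.sub_mulVec] at hv0
  have h1 : (algebraMap ℂ (Matrix n n ℂ) μ).mulVec v = μ • v := by
    rw [Matrix.algebraMap_eq_diagonal]
    ext a
    simp [Matrix.mulVec_diagonal, Pi.algebraMap_apply, Algebra.algebraMap_self_apply]
  rw [h1] at hv0
  exact (sub_eq_zero.mp hv0).symm

theorem aux_pow_nonneg {ι : Type*} [Fintype ι] [DecidableEq ι] {T : Matrix ι ι ℝ}
    (h0 : ∀ a b, 0 ≤ T a b) : ∀ m a b, 0 ≤ (T ^ m) a b := by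
  intro m
  induction m with
  | zero => intro a b; rw [pow_zero, Matrix.one_apply]; positivity
  | succ m ih =>
    intro a b
    rw [pow_succ, Matrix.mul_apply]
    exact Finset.sum_nonneg fun c _ => mul_nonneg (ih a c) (h0 c b)

theorem aux_pow_rowsum {ι : Type*} [Fintype ι] [DecidableEq ι] {T : Matrix ι ι ℝ}
    (h1 : ∀ a, ∑ b, T a b = 1) : ∀ m a, ∑ b, (T ^ m) a b = 1 := by
  intro m
  induction m with
  | zero => intro a; simp [Matrix.one_apply]
  | succ m ih =>
    intro a
    simp only [pow_succ, Matrix.mul_apply]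
    rw [Finset.sum_comm]
    calc ∑ c, ∑ b, (T ^ m) a c * T c b = ∑ c, (T ^ m) a c * ∑ b, T c b := by
          simp [Finset.mul_sum]
      _ = 1 := by simp only [h1, mul_one]; exact ih a

theorem aux_doeblin {ι : Type*} [Fintype ι] [DecidableEq ι] {A : Matrix ι ι ℝ} {ε B : ℝ}
    (hε : ∀ a b, ε ≤ A a b) (h1 : ∀ a, ∑ b, A a b = 1)
    (u : ι → ℂ) (c₀ : ℂ) (hB : ∀ a, ‖u a - c₀‖ ≤ B) :
    ∃ c : ℂ, ∀ a, ‖(A.map Complex.ofReal).mulVec u a - c‖ ≤ (1 - (Fintype.card ι : ℝ) * ε) * B := by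
  set θ : ℝ := 1 - (Fintype.card ι : ℝ) * ε with hθ
  refine ⟨(ε : ℂ) * ∑ x, u x + (θ : ℂ) * c₀, fun a => ?_⟩
  have hsum : ∑ x, (A a x - ε) = θ := by
    rw [Finset.sum_sub_distrib, h1 a, Finset.sum_const, Finset.card_univ, nsmul_eq_mul, hθ]
  have key : (A.map Complex.ofReal).mulVec u a - ((ε : ℂ) * ∑ x, u x + (θ : ℂ) * c₀)
      = ∑ x, ((A a x - ε : ℝ) : ℂ) * (u x - c₀) := by
    have hsc : ∑ x, ((A a x - ε : ℝ) : ℂ) = (θ : ℂ) := by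
      rw [← Complex.ofReal_sum, hsum]
    simp only [Matrix.mulVec, dotProduct, Matrix.map_apply]
    calc (∑ x, ((A a x : ℝ) : ℂ) * u x) - ((ε : ℂ) * ∑ x, u x + (θ : ℂ) * c₀)
        = (∑ x, (((A a x : ℝ) : ℂ) * u x - (ε : ℂ) * u x)) - (θ : ℂ) * c₀ := by
          rw [Finset.sum_sub_distrib, ← Finset.mul_sum]; ring
      _ = (∑ x, ((A a x - ε : ℝ) : ℂ) * u x) - (∑ x, ((A a x - ε : ℝ) : ℂ)) * c₀ := by
          rw [hsc]; congr 1; refine Finset.sum_congr rfl fun x _ => ?_; push_cast; ring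
      _ = ∑ x, ((A a x - ε : ℝ) : ℂ) * (u x - c₀) := by
          rw [Finset.sum_mul, ← Finset.sum_sub_distrib]
          refine Finset.sum_congr rfl fun x _ => ?_; ring
  rw [key]
  calc ‖∑ x, ((A a x - ε : ℝ) : ℂ) * (u x - c₀)‖ ≤ ∑ x, ‖((A a x - ε : ℝ) : ℂ) * (u x - c₀)‖ :=
        norm_sum_le _ _
    _ ≤ ∑ x, (A a x - ε) * B := by
        refine Finset.sum_le_sum fun x _ => ?_
        rw [norm_mul, Complex.norm_real, Real.norm_eq_abs, abs_of_nonneg (by linarith [hε a x])]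
        exact mul_le_mul_of_nonneg_left (hB x) (by linarith [hε a x])
    _ = θ * B := by rw [← Finset.sum_mul, hsum]

theorem aux_prim_left {ι : Type*} [Fintype ι] [DecidableEq ι] {T : Matrix (ι × ι) (ι × ι) ℝ}
    {EK : Matrix ι ι ℝ} {δ : ℝ} (hδ : 0 ≤ δ) (hEK0 : ∀ i j, 0 ≤ EK i j)
    (hT0 : ∀ a b, 0 ≤ T a b)
    (hstep : ∀ i a j, δ * EK i a ≤ T (i, j) (a, j)) :
    ∀ m i i' j, δ ^ m * (EK ^ m) i i' ≤ (T ^ m) (i, j) (i', j) := by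
  intro m
  induction m with
  | zero =>
    intro i i' j
    by_cases h : i = i'
    · subst h; simp [Matrix.one_apply]
    · simp [Matrix.one_apply, h, Prod.ext_iff]
  | succ m ih =>
    intro i i' j
    simp only [pow_succ', Matrix.mul_apply]
    calc δ * δ ^ m * ∑ a, EK i a * (EK ^ m) a i'
        = ∑ a, (δ * EK i a) * (δ ^ m * (EK ^ m) a i') := by
          rw [Finset.mul_sum]; refine Finset.sum_congr rfl fun a _ => by ring
      _ ≤ ∑ a, T (i, j) (a, j) * (T ^ m) ((a, j)) (i', j) := by
          refine Finset.sum_le_sum fun a _ => ?_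
          exact mul_le_mul (hstep i a j) (ih a i' j)
            (mul_nonneg (pow_nonneg hδ m) (aux_pow_nonneg hEK0 m a i')) (hT0 _ _)
      _ ≤ ∑ x : ι × ι, T (i, j) x * (T ^ m) x (i', j) := by
          rw [Fintype.sum_prod_type]
          refine Finset.sum_le_sum fun a _ => ?_
          refine Finset.single_le_sum (f := fun b => T (i, j) (a, b) * (T ^ m) ((a, b)) (i', j))
            (fun b _ => mul_nonneg (hT0 _ _) (aux_pow_nonneg hT0 m _ _)) (Finset.mem_univ j)

theorem aux_prim_right {ι : Type*} [Fintype ι] [DecidableEq ι] {T : Matrix (ι × ι) (ι × ι) ℝ}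
    {EK : Matrix ι ι ℝ} {δ : ℝ} (hδ : 0 ≤ δ) (hEK0 : ∀ i j, 0 ≤ EK i j)
    (hT0 : ∀ a b, 0 ≤ T a b)
    (hstep : ∀ j b i, δ * EK j b ≤ T (i, j) (i, b)) :
    ∀ m j j' i, δ ^ m * (EK ^ m) j j' ≤ (T ^ m) (i, j) (i, j') := by
  intro m
  induction m with
  | zero =>
    intro j j' i
    by_cases h : j = j'
    · subst h; simp [Matrix.one_apply]
    · simp [Matrix.one_apply, h, Prod.ext_iff]
  | succ m ih =>
    intro j j' i
    simp only [pow_succ', Matrix.mul_apply]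
    calc δ * δ ^ m * ∑ b, EK j b * (EK ^ m) b j'
        = ∑ b, (δ * EK j b) * (δ ^ m * (EK ^ m) b j') := by
          rw [Finset.mul_sum]; refine Finset.sum_congr rfl fun b _ => by ring
      _ ≤ ∑ b, T (i, j) (i, b) * (T ^ m) ((i, b)) (i, j') := by
          refine Finset.sum_le_sum fun b _ => ?_
          exact mul_le_mul (hstep j b i) (ih b j' i)
            (mul_nonneg (pow_nonneg hδ m) (aux_pow_nonneg hEK0 m b j')) (hT0 _ _)
      _ ≤ ∑ x : ι × ι, T (i, j) x * (T ^ m) x (i, j') := by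
          rw [Fintype.sum_prod_type]
          exact Finset.single_le_sum
            (f := fun a => ∑ b, T (i, j) (a, b) * (T ^ m) ((a, b)) (i, j'))
            (fun a _ => Finset.sum_nonneg fun b _ =>
              mul_nonneg (hT0 _ _) (aux_pow_nonneg hT0 m _ _)) (Finset.mem_univ i)

theorem mapc_mul {ι : Type*} [Fintype ι] [DecidableEq ι] (A B : Matrix ι ι ℝ) :
    (A * B).map Complex.ofReal = A.map Complex.ofReal * B.map Complex.ofReal :=
  Matrix.map_mul (f := Complex.ofRealHom)

theorem mapc_pow {ι : Type*} [Fintype ι] [DecidableEq ι] (A : Matrix ι ι ℝ) (m : ℕ) :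
    (A ^ m).map Complex.ofReal = (A.map Complex.ofReal) ^ m := by
  induction m with
  | zero => simp [Matrix.map_one Complex.ofReal Complex.ofReal_zero Complex.ofReal_one]
  | succ m ih => rw [pow_succ, pow_succ, mapc_mul, ih]

/-- The subspace of vectors on pairs of the form `(i,j) ↦ x i + y j`. -/
noncomputable def Wsub (N : ℕ) : Submodule ℂ (Fin N × Fin N → ℂ) where
  carrier := {w | ∃ x y : Fin N → ℂ, ∀ a, w a = x a.1 + y a.2}
  zero_mem' := ⟨0, 0, fun a => by simp⟩
  add_mem' := by
    rintro u v ⟨x, y, hxy⟩ ⟨x', y', hxy'⟩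
    exact ⟨x + x', y + y', fun a => by simp [hxy a, hxy' a]; ring⟩
  smul_mem' := by
    rintro c u ⟨x, y, hxy⟩
    exact ⟨c • x, c • y, fun a => by simp [hxy a]; ring⟩

theorem aux_kron_mulVec {N : ℕ} (A B : Matrix (Fin N) (Fin N) ℂ) (w : Fin N × Fin N → ℂ)
    (a : Fin N × Fin N) :
    (A ⊗ₖ B).mulVec w a = ∑ i', ∑ j', A a.1 i' * B a.2 j' * w (i', j') := by
  rw [Matrix.mulVec, dotProduct, Fintype.sum_prod_type]
  rfl

theorem aux_kron_sum_eq {N : ℕ} (A B : Matrix (Fin N) (Fin N) ℂ) {w : Fin N × Fin N → ℂ}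
    {x y : Fin N → ℂ} (hxy : ∀ a, w a = x a.1 + y a.2) (a : Fin N × Fin N) :
    (A ⊗ₖ B).mulVec w a
      = (∑ i', A a.1 i' * x i') * (∑ j', B a.2 j')
        + (∑ i', A a.1 i') * (∑ j', B a.2 j' * y j') := by
  rw [aux_kron_mulVec]
  calc ∑ i', ∑ j', A a.1 i' * B a.2 j' * w (i', j')
      = ∑ i', (A a.1 i' * x i' * (∑ j', B a.2 j') + A a.1 i' * (∑ j', B a.2 j' * y j')) := by
        refine Finset.sum_congr rfl fun i' _ => ?_
        rw [Finset.mul_sum, Finset.mul_sum, ← Finset.sum_add_distrib]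
        refine Finset.sum_congr rfl fun j' _ => ?_
        rw [hxy (i', j')]; ring
    _ = _ := by rw [Finset.sum_add_distrib, ← Finset.sum_mul, ← Finset.sum_mul]

theorem aux_W_kron {N : ℕ} {A B : Matrix (Fin N) (Fin N) ℂ}
    (hA : ∀ i, ∑ j, A i j = 1) (hB : ∀ i, ∑ j, B i j = 1)
    {w : Fin N × Fin N → ℂ} (hw : w ∈ Wsub N) : (A ⊗ₖ B).mulVec w ∈ Wsub N := by
  obtain ⟨x, y, hxy⟩ := hw
  refine ⟨fun i => ∑ i', A i i' * x i', fun j => ∑ j', B j j' * y j', fun a => ?_⟩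
  rw [aux_kron_sum_eq A B hxy, hA, hB, one_mul, mul_one]

theorem aux_W_killed {N : ℕ} {A B : Matrix (Fin N) (Fin N) ℂ}
    (hA : ∀ i, ∑ j, A i j = 0) (hB : ∀ i, ∑ j, B i j = 0)
    {w : Fin N × Fin N → ℂ} (hw : w ∈ Wsub N) : (A ⊗ₖ B).mulVec w = 0 := by
  obtain ⟨x, y, hxy⟩ := hw
  funext a
  rw [aux_kron_sum_eq A B hxy, hA, hB, zero_mul, mul_zero, add_zero]
  rfl

theorem aux_compl_expand {N : ℕ} (c : ℂ) (A : Matrix (Fin N) (Fin N) ℂ)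
    (hA : ∀ i j, A i j = (if i = j then 1 else 0) - c) (u : Fin N × Fin N → ℂ)
    (i j : Fin N) :
    (A ⊗ₖ A).mulVec u (i, j)
      = u (i,j) - c * ∑ j', u (i, j') - c * ∑ i', u (i', j)
        + c * c * ∑ i', ∑ j', u (i', j') := by
  rw [aux_kron_mulVec]
  simp only [hA]
  have key : ∀ i' j', ((if i = i' then (1:ℂ) else 0) - c) * ((if j = j' then (1:ℂ) else 0) - c) * u (i', j')
      = (if i = i' then (1:ℂ) else 0) * ((if j = j' then (1:ℂ) else 0) * u (i', j'))
        - c * ((if j = j' then (1:ℂ) else 0) * u (i', j'))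
        - c * ((if i = i' then (1:ℂ) else 0) * u (i', j'))
        + c * c * u (i', j') := by intro i' j'; ring
  simp only [key, Finset.sum_sub_distrib, Finset.sum_add_distrib, ← Finset.mul_sum,
    ite_mul, one_mul, zero_mul, Finset.sum_ite_eq, Finset.mem_univ, if_true]
  ring_nf
  simp [Finset.mul_sum]
  ring_nf

theorem aux_W_compl {N : ℕ} (c : ℂ) (A : Matrix (Fin N) (Fin N) ℂ)
    (hA : ∀ i j, A i j = (if i = j then 1 else 0) - c) (u : Fin N × Fin N → ℂ) :
    u - (A ⊗ₖ A).mulVec u ∈ Wsub N := by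
  refine ⟨fun i => c * ∑ j', u (i, j') - c * c * ∑ i', ∑ j', u (i', j'),
    fun j => c * ∑ i', u (i', j), fun a => ?_⟩
  obtain ⟨i, j⟩ := a
  have h := aux_compl_expand c A hA u i j
  simp only [Pi.sub_apply]
  rw [h]; ring

theorem stmt10 {N M : ℕ} (hN : 1 ≤ N) (hM : 1 ≤ M)
    (K : Fin M → Matrix (Fin N) (Fin N) ℝ)
    (hK : ∀ k, RowStochastic (K k))
    (hdiag : ∀ k i, 0 < K k i i)
    (p : Fin M → ℝ) (hp : ∀ k, 0 < p k) (hpsum : ∑ k, p k = 1)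
    (hprim : _root_.IsPrimitive (∑ k, p k • K k)) :
    specRad (((1 - Jmat N) ⊗ₖ (1 - Jmat N)) * ∑ k, p k • (K k ⊗ₖ K k)) < 1 := by

  classical
  have hN0 : (0:ℝ) < N := by exact_mod_cast hN
  haveI : NeZero N := ⟨by omega⟩
  set Q : Matrix (Fin N) (Fin N) ℝ := 1 - Jmat N with hQ
  set T : Matrix (Fin N × Fin N) (Fin N × Fin N) ℝ := ∑ k, p k • (K k ⊗ₖ K k) with hTdef
  set EK : Matrix (Fin N) (Fin N) ℝ := ∑ k, p k • K k with hEKdef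
  -- entry formulas
  have hTapp : ∀ a b : Fin N × Fin N, T a b = ∑ k, p k * (K k a.1 b.1 * K k a.2 b.2) := by
    intro a b
    rw [hTdef]
    simp [Matrix.sum_apply, Matrix.smul_apply, Matrix.kroneckerMap_apply, smul_eq_mul]
  have hEKapp : ∀ i j, EK i j = ∑ k, p k * K k i j := by
    intro i j
    rw [hEKdef]
    simp [Matrix.sum_apply, Matrix.smul_apply, smul_eq_mul]
  have hT0 : ∀ a b, 0 ≤ T a b := by
    intro a b
    rw [hTapp]
    exact Finset.sum_nonneg fun k _ => mul_nonneg (hp k).le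
      (mul_nonneg ((hK k).1 _ _) ((hK k).1 _ _))
  have hEK0 : ∀ i j, 0 ≤ EK i j := by
    intro i j
    rw [hEKapp]
    exact Finset.sum_nonneg fun k _ => mul_nonneg (hp k).le ((hK k).1 _ _)
  have hT1 : ∀ a, ∑ b, T a b = 1 := by
    intro a
    calc ∑ b, T a b = ∑ b : Fin N × Fin N, ∑ k, p k * (K k a.1 b.1 * K k a.2 b.2) := by
          exact Finset.sum_congr rfl fun b _ => hTapp a b
      _ = ∑ k, ∑ b : Fin N × Fin N, p k * (K k a.1 b.1 * K k a.2 b.2) := Finset.sum_comm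
      _ = ∑ k, p k := by
          refine Finset.sum_congr rfl fun k _ => ?_
          rw [Fintype.sum_prod_type]
          calc ∑ i', ∑ j', p k * (K k a.1 i' * K k a.2 j')
              = ∑ i', p k * K k a.1 i' * ∑ j', K k a.2 j' := by
                refine Finset.sum_congr rfl fun i' _ => ?_
                rw [Finset.mul_sum]
                exact Finset.sum_congr rfl fun j' _ => by ring
            _ = (∑ i', p k * K k a.1 i') * ∑ j', K k a.2 j' := by rw [Finset.sum_mul]
            _ = p k := by
                rw [(hK k).2, mul_one, ← Finset.mul_sum, (hK k).2, mul_one]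
      _ = 1 := hpsum
  -- δ and one-step bounds
  haveI : Nonempty (Fin M) := ⟨⟨0, hM⟩⟩
  haveI : Nonempty (Fin N) := ⟨⟨0, hN⟩⟩
  set δ : ℝ := (Finset.univ : Finset (Fin M × Fin N)).inf' ⟨(Classical.arbitrary _), Finset.mem_univ _⟩
    (fun q => K q.1 q.2 q.2) with hδdef
  have hδpos : 0 < δ := by
    rw [hδdef]
    exact (Finset.lt_inf'_iff _).2 fun q _ => hdiag q.1 q.2
  have hδle : ∀ k i, δ ≤ K k i i := fun k i => Finset.inf'_le _ (Finset.mem_univ (k, i))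
  have hstepL : ∀ i a j, δ * EK i a ≤ T (i, j) (a, j) := by
    intro i a j
    rw [hTapp, hEKapp, Finset.mul_sum]
    refine Finset.sum_le_sum fun k _ => ?_
    have h1 : δ * K k i a ≤ K k i a * K k j j := by
      rw [mul_comm]
      exact mul_le_mul_of_nonneg_left (hδle k j) ((hK k).1 _ _)
    calc δ * (p k * K k i a) = p k * (δ * K k i a) := by ring
      _ ≤ p k * (K k i a * K k j j) := mul_le_mul_of_nonneg_left h1 (hp k).le
  have hstepR : ∀ j b i, δ * EK j b ≤ T (i, j) (i, b) := by
    intro j b i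
    rw [hTapp, hEKapp, Finset.mul_sum]
    refine Finset.sum_le_sum fun k _ => ?_
    have h1 : δ * K k j b ≤ K k i i * K k j b := by
      exact mul_le_mul_of_nonneg_right (hδle k i) ((hK k).1 _ _)
    calc δ * (p k * K k j b) = p k * (δ * K k j b) := by ring
      _ ≤ p k * (K k i i * K k j b) := mul_le_mul_of_nonneg_left h1 (hp k).le
  obtain ⟨m₀, hm₀, hEKpos⟩ := hprim
  set Mm : ℕ := 2 * m₀ with hMmdef
  have hMm0 : 0 < Mm := by omega
  have hTpos : ∀ a b, 0 < (T ^ Mm) a b := by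
    rintro ⟨i, j⟩ ⟨i', j'⟩
    have h2 : T ^ Mm = T ^ m₀ * T ^ m₀ := by rw [← pow_add, hMmdef, two_mul]
    rw [h2, Matrix.mul_apply]
    have hL : δ ^ m₀ * (EK ^ m₀) i i' ≤ (T ^ m₀) (i, j) (i', j) :=
      aux_prim_left hδpos.le hEK0 hT0 hstepL m₀ i i' j
    have hR : δ ^ m₀ * (EK ^ m₀) j j' ≤ (T ^ m₀) (i', j) (i', j') :=
      aux_prim_right hδpos.le hEK0 hT0 hstepR m₀ j j' i'
    have hmid : 0 < (T ^ m₀) (i, j) (i', j) * (T ^ m₀) (i', j) (i', j') :=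
      mul_pos (lt_of_lt_of_le (mul_pos (pow_pos hδpos m₀) (hEKpos i i')) hL)
        (lt_of_lt_of_le (mul_pos (pow_pos hδpos m₀) (hEKpos j j')) hR)
    exact lt_of_lt_of_le hmid (Finset.single_le_sum
      (f := fun c => (T ^ m₀) (i, j) c * (T ^ m₀) c (i', j'))
      (fun c _ => mul_nonneg (aux_pow_nonneg hT0 m₀ _ _) (aux_pow_nonneg hT0 m₀ _ _))
      (Finset.mem_univ (i', j)))
  -- ε and θ
  set ε : ℝ := (Finset.univ : Finset ((Fin N × Fin N) × (Fin N × Fin N))).inf'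
    ⟨(Classical.arbitrary _), Finset.mem_univ _⟩ (fun q => (T ^ Mm) q.1 q.2) with hεdef
  have hεpos : 0 < ε := by
    rw [hεdef]
    exact (Finset.lt_inf'_iff _).2 fun q _ => hTpos q.1 q.2
  have hεle : ∀ a b, ε ≤ (T ^ Mm) a b := fun a b => Finset.inf'_le _ (Finset.mem_univ (a, b))
  set n : ℝ := (Fintype.card (Fin N × Fin N) : ℝ) with hndef
  have hnpos : 0 < n := by
    rw [hndef]
    exact_mod_cast Fintype.card_pos
  set θ : ℝ := 1 - n * ε with hθdef
  have hθ0 : 0 ≤ θ := by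
    have ha := aux_pow_rowsum hT1 Mm (Classical.arbitrary _)
    have : n * ε = ∑ _b : Fin N × Fin N, ε := by
      rw [Finset.sum_const, Finset.card_univ, nsmul_eq_mul, hndef]
    have h2 : n * ε ≤ 1 := by
      rw [this, ← ha]
      exact Finset.sum_le_sum fun b _ => hεle _ b
    rw [hθdef]; linarith
  have hθ1 : θ < 1 := by
    rw [hθdef]
    nlinarith
  -- complex matrices
  set Tc : Matrix (Fin N × Fin N) (Fin N × Fin N) ℂ := T.map Complex.ofReal with hTcdef
  set Pc : Matrix (Fin N × Fin N) (Fin N × Fin N) ℂ := (Q ⊗ₖ Q).map Complex.ofReal with hPcdef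
  set Qc : Matrix (Fin N) (Fin N) ℂ := Q.map Complex.ofReal with hQcdef
  have hPcQc : Pc = Qc ⊗ₖ Qc := by
    rw [hPcdef, hQcdef]
    ext a b
    simp [Matrix.kroneckerMap_apply, Matrix.map_apply]
  have hQcapp : ∀ i j, Qc i j = (if i = j then 1 else 0) - (((N : ℝ)⁻¹ : ℝ) : ℂ) := by
    intro i j
    rw [hQcdef]
    simp [Matrix.map_apply, hQ, Jmat, Matrix.sub_apply, Matrix.one_apply,
      apply_ite (Complex.ofReal)]
  have hQrow0 : ∀ i, ∑ j, Qc i j = 0 := by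
    intro i
    simp only [hQcapp]
    rw [Finset.sum_sub_distrib, Finset.sum_ite_eq, Finset.sum_const, Finset.card_univ]
    simp only [Finset.mem_univ, if_true, Fintype.card_fin, nsmul_eq_mul]
    rw [mul_comm, ← Complex.ofReal_natCast, ← Complex.ofReal_mul,
      inv_mul_cancel₀ (by exact_mod_cast hN0.ne')]
    simp
  have hKc1 : ∀ k (i : Fin N), ∑ j, ((K k).map Complex.ofReal) i j = 1 := by
    intro k i
    simp only [Matrix.map_apply]
    rw [← Complex.ofReal_sum, (hK k).2, Complex.ofReal_one]
  -- W facts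
  have hconstW : ∀ c : ℂ, (fun _ : Fin N × Fin N => c) ∈ Wsub N :=
    fun c => ⟨fun _ => c, 0, fun a => by simp⟩
  have hTcW : ∀ w ∈ Wsub N, Tc.mulVec w ∈ Wsub N := by
    intro w hw
    have hTcsum : Tc = ∑ k, (p k : ℂ) •
        (((K k).map Complex.ofReal) ⊗ₖ ((K k).map Complex.ofReal)) := by
      rw [hTcdef, hTdef]
      ext a b
      simp only [Matrix.map_apply, Matrix.sum_apply, Matrix.smul_apply,
        Matrix.kroneckerMap_apply, smul_eq_mul]
      push_cast
      ring
    rw [hTcsum]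
    have hsplit : ∀ s : Finset (Fin M), (∑ k ∈ s, (p k : ℂ) •
          (((K k).map Complex.ofReal) ⊗ₖ ((K k).map Complex.ofReal))).mulVec w
        = ∑ k ∈ s, (p k : ℂ) •
          ((((K k).map Complex.ofReal) ⊗ₖ ((K k).map Complex.ofReal)).mulVec w) := by
      intro s
      induction s using Finset.induction with
      | empty => simp [Matrix.zero_mulVec]
      | insert _ _ hx ih =>
        rw [Finset.sum_insert hx, Finset.sum_insert hx, Matrix.add_mulVec,
          Matrix.smul_mulVec, ih]
    rw [hsplit Finset.univ]
    exact Submodule.sum_mem _ fun k _ =>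
      Submodule.smul_mem _ _ (aux_W_kron (hKc1 k) (hKc1 k) hw)
  have hPcW : ∀ w ∈ Wsub N, Pc.mulVec w = 0 := by
    intro w hw
    rw [hPcQc]
    exact aux_W_killed hQrow0 hQrow0 hw
  have hcomplW : ∀ u, u - Pc.mulVec u ∈ Wsub N := by
    intro u
    rw [hPcQc]
    exact aux_W_compl _ Qc hQcapp u
  -- the target radius
  set r : ℝ := θ ^ ((Mm : ℝ)⁻¹) with hrdef
  have hr0 : 0 ≤ r := Real.rpow_nonneg hθ0 _
  have hr1 : r < 1 := Real.rpow_lt_one hθ0 hθ1 (by positivity)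
  have hkey : ∀ μ ∈ spectrum ℂ (((Q ⊗ₖ Q) * T).map Complex.ofReal), ‖μ‖ ≤ r := by
    intro μ hμ
    obtain ⟨v, hv, hμv⟩ := aux_eigvec _ μ hμ
    by_cases hμ0 : μ = 0
    · rw [hμ0]
      simpa using hr0
    have heig : Pc.mulVec (Tc.mulVec v) = μ • v := by
      rw [hPcdef, hTcdef, Matrix.mulVec_mulVec, ← mapc_mul, hμv]
    -- decomposition of iterates
    have hdec : ∀ m : ℕ, ∃ w ∈ Wsub N, (Tc ^ m).mulVec v = μ ^ m • v + w := by
      intro m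
      induction m with
      | zero =>
        exact ⟨0, (Wsub N).zero_mem, by simp [Matrix.one_mulVec]⟩
      | succ m ih =>
        obtain ⟨w, hw, heq⟩ := ih
        obtain ⟨z, hzW, hzdef⟩ : ∃ z, z ∈ Wsub N ∧ z = Tc.mulVec v - Pc.mulVec (Tc.mulVec v) :=
          ⟨_, hcomplW (Tc.mulVec v), rfl⟩
        have hTv : Tc.mulVec v = μ • v + z := by
          rw [hzdef, heig]
          abel
        refine ⟨μ ^ m • z + Tc.mulVec w,
          (Wsub N).add_mem ((Wsub N).smul_mem _ hzW) (hTcW w hw), ?_⟩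
        calc (Tc ^ (m + 1)).mulVec v = Tc.mulVec ((Tc ^ m).mulVec v) := by
              rw [Matrix.mulVec_mulVec, ← pow_succ']
          _ = Tc.mulVec (μ ^ m • v + w) := by rw [heq]
          _ = μ ^ m • Tc.mulVec v + Tc.mulVec w := by
              rw [Matrix.mulVec_add, Matrix.mulVec_smul]
          _ = μ ^ m • (μ • v + z) + Tc.mulVec w := by rw [hTv]
          _ = μ ^ (m + 1) • v + (μ ^ m • z + Tc.mulVec w) := by
              rw [smul_add, smul_smul, pow_succ]
              abel
    -- v is not in W
    have hvW : v ∉ (Wsub N : Set (Fin N × Fin N → ℂ)) := by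
      intro hvin
      have h1 : Tc.mulVec v ∈ Wsub N := hTcW _ hvin
      have h2 : Pc.mulVec (Tc.mulVec v) = 0 := hPcW _ h1
      rw [heig] at h2
      exact hv ((smul_eq_zero.mp h2).resolve_left hμ0)
    -- distance from v to W
    have hWclosed : IsClosed ((Wsub N : Submodule ℂ _) : Set (Fin N × Fin N → ℂ)) :=
      Submodule.closed_of_finiteDimensional _
    set d : ℝ := Metric.infDist v ((Wsub N : Submodule ℂ _) : Set (Fin N × Fin N → ℂ)) with hddef
    have hd : 0 < d := (hWclosed.notMem_iff_infDist_pos ⟨0, (Wsub N).zero_mem⟩).1 hvW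
    -- lower bound on norms
    have hlow : ∀ (m : ℕ) (w : Fin N × Fin N → ℂ), w ∈ Wsub N →
        ‖μ‖ ^ m * d ≤ ‖μ ^ m • v + w‖ := by
      intro m w hw
      have hμm : μ ^ m ≠ 0 := pow_ne_zero m hμ0
      have hrw : μ ^ m • v + w = μ ^ m • (v - (-((μ ^ m)⁻¹ • w))) := by
        rw [smul_sub, smul_neg, smul_smul, mul_inv_cancel₀ hμm, one_smul, sub_neg_eq_add]
      have hmemW : -((μ ^ m)⁻¹ • w) ∈ Wsub N := (Wsub N).neg_mem ((Wsub N).smul_mem _ hw)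
      have hdist : d ≤ ‖v - (-((μ ^ m)⁻¹ • w))‖ := by
        rw [hddef, ← dist_eq_norm]
        exact Metric.infDist_le_dist_of_mem hmemW
      rw [hrw, norm_smul, norm_pow]
      exact mul_le_mul_of_nonneg_left hdist (by positivity)
    -- contraction of iterates toward constants
    have hB0 : ∀ a, ‖v a - 0‖ ≤ ‖v‖ := fun a => by simpa using norm_le_pi_norm v a
    have hcontr : ∀ k : ℕ, ∃ c : ℂ, ∀ a, ‖(Tc ^ (k * Mm)).mulVec v a - c‖ ≤ θ ^ k * ‖v‖ := by
      intro k
      induction k with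
      | zero =>
        exact ⟨0, fun a => by simpa [Matrix.one_mulVec] using hB0 a⟩
      | succ k ih =>
        obtain ⟨c, hc⟩ := ih
        obtain ⟨c', hc'⟩ := aux_doeblin hεle (aux_pow_rowsum hT1 Mm)
          ((Tc ^ (k * Mm)).mulVec v) c hc
        refine ⟨c', fun a => ?_⟩
        have hcomp : (Tc ^ ((k + 1) * Mm)).mulVec v
            = ((T ^ Mm).map Complex.ofReal).mulVec ((Tc ^ (k * Mm)).mulVec v) := by
          rw [mapc_pow, hTcdef, Matrix.mulVec_mulVec, ← pow_add]
          congr 2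
          ring
        rw [hcomp]
        calc ‖((T ^ Mm).map Complex.ofReal).mulVec ((Tc ^ (k * Mm)).mulVec v) a - c'‖
            ≤ (1 - (Fintype.card (Fin N × Fin N) : ℝ) * ε) * (θ ^ k * ‖v‖) := hc' a
          _ = θ ^ (k + 1) * ‖v‖ := by
              rw [hθdef, hndef, pow_succ]
              ring
    -- combination
    have hcomb : ∀ k : ℕ, (‖μ‖ ^ Mm) ^ k * d ≤ θ ^ k * ‖v‖ := by
      intro k
      obtain ⟨c, hc⟩ := hcontr k
      obtain ⟨w, hw, heq⟩ := hdec (k * Mm)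
      have hnormle : ‖(Tc ^ (k * Mm)).mulVec v - (fun _ => c)‖ ≤ θ ^ k * ‖v‖ := by
        refine (pi_norm_le_iff_of_nonneg (by positivity)).2 fun a => ?_
        simpa using hc a
      have hrw2 : (Tc ^ (k * Mm)).mulVec v - (fun _ => c)
          = μ ^ (k * Mm) • v + (w - fun _ => c) := by
        rw [heq]
        abel
      rw [hrw2] at hnormle
      have hlow' := hlow (k * Mm) (w - fun _ => c) ((Wsub N).sub_mem hw (hconstW c))
      calc (‖μ‖ ^ Mm) ^ k * d = ‖μ‖ ^ (k * Mm) * d := by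
            rw [← pow_mul, mul_comm Mm k]
        _ ≤ ‖μ ^ (k * Mm) • v + (w - fun _ => c)‖ := hlow' 
        _ ≤ θ ^ k * ‖v‖ := hnormle
    -- conclude ‖μ‖ ^ Mm ≤ θ
    have hnv : 0 < ‖v‖ := norm_pos_iff.2 hv
    have hμn : 0 < ‖μ‖ := norm_pos_iff.2 hμ0
    have hle : ‖μ‖ ^ Mm ≤ θ := by
      by_contra hgt
      push_neg at hgt
      rcases eq_or_lt_of_le hθ0 with hθz | hθp
      · have h1 := hcomb 1
        rw [← hθz] at h1
        simp only [pow_one, zero_mul] at h1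
        nlinarith [pow_pos hμn Mm]
      · have hq : 1 < ‖μ‖ ^ Mm / θ := (one_lt_div hθp).2 hgt
        obtain ⟨k, hk⟩ := pow_unbounded_of_one_lt (‖v‖ / d) hq
        rw [div_pow, div_lt_div_iff₀ hd (by positivity)] at hk
        have h2 := hcomb k
        nlinarith
    -- conclude ‖μ‖ ≤ r
    have hMmne : (Mm : ℝ) ≠ 0 := by
      exact_mod_cast hMm0.ne'
    calc ‖μ‖ = (‖μ‖ ^ Mm) ^ ((Mm : ℝ)⁻¹) := by
          rw [← Real.rpow_natCast ‖μ‖ Mm, ← Real.rpow_mul (norm_nonneg μ),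
            mul_inv_cancel₀ hMmne, Real.rpow_one]
      _ ≤ θ ^ ((Mm : ℝ)⁻¹) := Real.rpow_le_rpow (by positivity) hle (by positivity)
      _ = r := hrdef.symm
  -- wrap up
  have hsr : spectralRadius ℂ (((Q ⊗ₖ Q) * T).map Complex.ofReal) ≤ ENNReal.ofReal r := by
    rw [spectralRadius]
    refine iSup₂_le fun μ hμ => ?_
    rw [← enorm_eq_nnnorm, ← ofReal_norm]
    exact ENNReal.ofReal_le_ofReal (hkey μ hμ)
  have hfin : specRad ((Q ⊗ₖ Q) * T) ≤ r := ENNReal.toReal_le_of_le_ofReal hr0 hsr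
  exact lt_of_le_of_lt hfin hr1
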